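/- Let d ≥ 1 be a real number and let G be a seminormed additive commutative group such that ‖g‖ ≤ √d/2 for every g ∈ G. Define f(r) = sin(π r/√d) for r ≥ 0. Then for all x, y ∈ G one has f(‖x − y‖) ≤ f(‖x‖) + f(‖y‖). -/

import Mathlib

open Real

theorem sin_dist_subadditive {G : Type*} [SeminormedAddCommGroup G]
    (d : ℝ) (hd : 1 ≤ d)
    (hbound : ∀ g : G, ‖g‖ ≤ Real.sqrt d / 2)
    (x y : G) :
    Real.sin (π * ‖x - y‖ / Real.sqrt d) ≤
      Real.sin (π * ‖x‖ / Real.sqrt d) + Real.sin (π * ‖y‖ / Real.sqrt d) := by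
  have hs : (1 : ℝ) ≤ Real.sqrt d := by
    rw [show (1:ℝ) = Real.sqrt 1 by simp]
    exact Real.sqrt_le_sqrt hd
  have hs0 : (0 : ℝ) < Real.sqrt d := lt_of_lt_of_le one_pos hs
  set a := π * ‖x‖ / Real.sqrt d with ha
  set b := π * ‖y‖ / Real.sqrt d with hb
  set c := π * ‖x - y‖ / Real.sqrt d with hc
  have hrange : ∀ g : G, 0 ≤ π * ‖g‖ / Real.sqrt d ∧ π * ‖g‖ / Real.sqrt d ≤ π / 2 := by
    intro g
    constructor
    · positivity
    · rw [div_le_div_iff₀ hs0 two_pos]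
      have := hbound g
      nlinarith [Real.pi_pos, norm_nonneg g]
  obtain ⟨ha0, ha2⟩ := hrange x
  obtain ⟨hb0, hb2⟩ := hrange y
  obtain ⟨hc0, hc2⟩ := hrange (x - y)
  have hcab : c ≤ a + b := by
    have h := norm_sub_le x y
    rw [ha, hb, hc, ← add_div, ← mul_add]
    gcongr
  have hsin_a0 : 0 ≤ Real.sin a := Real.sin_nonneg_of_nonneg_of_le_pi ha0 (by linarith [Real.pi_pos])
  have hsin_b0 : 0 ≤ Real.sin b := Real.sin_nonneg_of_nonneg_of_le_pi hb0 (by linarith [Real.pi_pos])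
  by_cases hcase : a + b ≤ π / 2
  · have h1 : Real.sin c ≤ Real.sin (a + b) := by
      rcases eq_or_lt_of_le hcab with h | h
      · rw [h]
      · exact le_of_lt (Real.sin_lt_sin_of_lt_of_le_pi_div_two (by linarith) hcase h)
    have h2 : Real.sin (a + b) ≤ Real.sin a + Real.sin b := by
      rw [Real.sin_add]
      have hca : Real.cos a ≤ 1 := Real.cos_le_one a
      have hcb : Real.cos b ≤ 1 := Real.cos_le_one b
      have hca0 : 0 ≤ Real.cos a := Real.cos_nonneg_of_mem_Icc ⟨by linarith, ha2⟩
      have hcb0 : 0 ≤ Real.cos b := Real.cos_nonneg_of_mem_Icc ⟨by linarith, hb2⟩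
      nlinarith
    linarith
  · have h1 : Real.sin c ≤ 1 := Real.sin_le_one c
    have hba : π / 2 - a ≤ b := by linarith
    have h2 : Real.cos a ≤ Real.sin b := by
      rw [← Real.sin_pi_div_two_sub]
      rcases eq_or_lt_of_le hba with h | h
      · rw [h]
      · exact le_of_lt (Real.sin_lt_sin_of_lt_of_le_pi_div_two (by linarith [Real.pi_pos]) hb2 h)
    have h3 : 1 ≤ Real.sin a + Real.cos a := by
      have hca0 : 0 ≤ Real.cos a := Real.cos_nonneg_of_mem_Icc ⟨by linarith, ha2⟩
      nlinarith [Real.sin_sq_add_cos_sq a]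
    linarith
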